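/- (Multiplicative Kirchhoff index.) Let P be a primitive stochastic matrix on a finite nonempty state space X with stationary distribution π, F the fundamental matrix, and Ω the resistance distance. Let M be the diagonal matrix with M_{i,i} = π_i. Then Σ_{i,j ∈ X} π_i π_j Ω_{i,j} = 2 · Tr(MF − MΠ); equivalently, Σ_{i,j ∈ X} π_i π_j Ω_{i,j} = 2 (Σ_i π_i F_{i,i} − Σ_i π_i²). -/

import Mathlib

open Matrix BigOperators Finset

theorem stmt_12
    {X : Type*} [Fintype X] [Nonempty X] [DecidableEq X]
    (P : Matrix X X ℝ)
    (hP_nonneg : ∀ i j, 0 ≤ P i j)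
    (hP_row : ∀ i, ∑ j, P i j = 1)
    (hP_prim : ∃ N : ℕ, 1 ≤ N ∧ ∀ i j, 0 < (P ^ N) i j)
    (pi : X → ℝ)
    (hpi_pos : ∀ i, 0 < pi i)
    (hpi_sum : ∑ i, pi i = 1)
    (hpi_stat : ∀ j, ∑ i, pi i * P i j = pi j)
    (PiM : Matrix X X ℝ)
    (hPiM : ∀ i j, PiM i j = pi j)
    (F : Matrix X X ℝ)
    (hF1 : F * (1 - P + PiM) = 1)
    (hF2 : (1 - P + PiM) * F = 1)
    (Ω : X → X → ℝ)
    (hΩ : ∀ i j, Ω i j = F i i + F j j - F i j - F j i)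
    : ∑ i, ∑ j, pi i * pi j * Ω i j
        = 2 * ((Matrix.diagonal pi) * F - (Matrix.diagonal pi) * PiM).trace ∧
      ∑ i, ∑ j, pi i * pi j * Ω i j
        = 2 * ((∑ i, pi i * F i i) - ∑ i, (pi i) ^ 2) := by
  set Q : Matrix X X ℝ := 1 - P + PiM with hQ
  -- π Q = π
  have hpiQ : ∀ j, ∑ i, pi i * Q i j = pi j := by
    intro j
    have : ∑ i, pi i * Q i j
        = ∑ i, (pi i * (1 : Matrix X X ℝ) i j - pi i * P i j + pi i * PiM i j) := by
      apply Finset.sum_congr rfl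
      intro i _
      simp [hQ, Matrix.sub_apply, Matrix.add_apply]
      ring
    rw [this, Finset.sum_add_distrib, Finset.sum_sub_distrib, hpi_stat]
    have h1 : ∑ i, pi i * (1 : Matrix X X ℝ) i j = pi j := by
      simp [Matrix.one_apply]
    have h2 : ∑ i, pi i * PiM i j = pi j := by
      simp only [hPiM, ← Finset.sum_mul, hpi_sum, one_mul]
    rw [h1, h2]; ring
  -- π F = π
  have hpiF : ∀ j, ∑ i, pi i * F i j = pi j := by
    intro j
    calc ∑ i, pi i * F i j
        = ∑ i, (∑ k, pi k * Q k i) * F i j := by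
          apply Finset.sum_congr rfl; intro i _; rw [hpiQ]
      _ = ∑ i, ∑ k, pi k * Q k i * F i j := by
          apply Finset.sum_congr rfl; intro i _
          rw [Finset.sum_mul]
      _ = ∑ k, pi k * ∑ i, Q k i * F i j := by
          rw [Finset.sum_comm]
          apply Finset.sum_congr rfl; intro k _
          rw [Finset.mul_sum]
          apply Finset.sum_congr rfl; intro i _; ring
      _ = ∑ k, pi k * (1 : Matrix X X ℝ) k j := by
          apply Finset.sum_congr rfl; intro k _
          congr 1
          have := congrFun (congrFun hF2 k) j
          simpa [Matrix.mul_apply] using this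
      _ = pi j := by simp [Matrix.one_apply]
  -- main computation of the double sum
  set S := ∑ i, pi i * F i i with hS
  set T := ∑ i, (pi i) ^ 2 with hT
  have hmain : ∑ i, ∑ j, pi i * pi j * Ω i j = 2 * (S - T) := by
    have expand : ∀ i j, pi i * pi j * Ω i j
        = pi i * pi j * F i i + pi i * pi j * F j j
            - pi i * pi j * F i j - pi i * pi j * F j i := by
      intro i j; rw [hΩ]; ring
    have hA : ∑ i, ∑ j, pi i * pi j * F i i = S := by
      apply Finset.sum_congr rfl; intro i _
      have : ∑ j, pi i * pi j * F i i = (∑ j, pi j) * (pi i * F i i) := by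
        rw [Finset.sum_mul]
        apply Finset.sum_congr rfl; intro j _; ring
      rw [this, hpi_sum, one_mul]
    have hB : ∑ i, ∑ j, pi i * pi j * F j j = S := by
      rw [Finset.sum_comm]
      apply Finset.sum_congr rfl; intro j _
      have : ∑ i, pi i * pi j * F j j = (∑ i, pi i) * (pi j * F j j) := by
        rw [Finset.sum_mul]
        apply Finset.sum_congr rfl; intro i _; ring
      rw [this, hpi_sum, one_mul]
    have hC : ∑ i, ∑ j, pi i * pi j * F i j = T := by
      rw [Finset.sum_comm]
      apply Finset.sum_congr rfl; intro j _
      have : ∑ i, pi i * pi j * F i j = pi j * ∑ i, pi i * F i j := by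
        rw [Finset.mul_sum]
        apply Finset.sum_congr rfl; intro i _; ring
      rw [this, hpiF, sq]
    have hD : ∑ i, ∑ j, pi i * pi j * F j i = T := by
      apply Finset.sum_congr rfl; intro i _
      have : ∑ j, pi i * pi j * F j i = pi i * ∑ j, pi j * F j i := by
        rw [Finset.mul_sum]
        apply Finset.sum_congr rfl; intro j _; ring
      rw [this, hpiF, sq]
    calc ∑ i, ∑ j, pi i * pi j * Ω i j
        = ∑ i, ∑ j, (pi i * pi j * F i i + pi i * pi j * F j j
            - pi i * pi j * F i j - pi i * pi j * F j i) := by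
          apply Finset.sum_congr rfl; intro i _
          apply Finset.sum_congr rfl; intro j _
          exact expand i j
      _ = (∑ i, ∑ j, pi i * pi j * F i i) + (∑ i, ∑ j, pi i * pi j * F j j)
            - (∑ i, ∑ j, pi i * pi j * F i j) - (∑ i, ∑ j, pi i * pi j * F j i) := by
          simp only [Finset.sum_sub_distrib, Finset.sum_add_distrib]
      _ = 2 * (S - T) := by rw [hA, hB, hC, hD]; ring
  have htrace : ((Matrix.diagonal pi) * F - (Matrix.diagonal pi) * PiM).trace = S - T := by
    rw [Matrix.trace_sub]
    congr 1
    · simp [Matrix.trace, Matrix.diag, Matrix.mul_apply, Matrix.diagonal, hS]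
    · simp [Matrix.trace, Matrix.diag, Matrix.mul_apply, Matrix.diagonal, hPiM, hT, sq]
  exact ⟨by rw [hmain, htrace], by rw [hmain]⟩
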